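/- Let C = (Z, N, Q, δ) and G = (Z, N, Q, γ) be fully asynchronous one-dimensional cellular automata, m = max_{n∈N} |n| (or −∞ if N = ∅), and A = {−|Q|^{2m+1}, …, |Q|^{2m+1}} (or {0} if N = ∅). Then C and G are inverse to each other if and only if: (1) for every pair c, c' ∈ Q^Z with D_{c,c'} = {0}, c' = Δ_{{0}}(c) ⇔ c = Γ_{{0}}(c'); and (2) for all c, c' ∈ Q^Z with c = Δ_{{0}}(c) and c' = Γ_{{0}}(c'), there exist a, a' ∈ A such that c = Γ_{{a}}(c) and c' = Δ_{{a'}}(c'). -/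

import Mathlib

noncomputable section
open scoped Classical

/-- The global transition function `Δ_A` of a one-dimensional CA with
neighborhood `N ⊆ ℤ`, local rule `δ` and active cell set `A`. -/
def stepZ {Q : Type*} (N : Finset ℤ) (δ : (↥N → Q) → Q)
    (A : Set ℤ) (c : ℤ → Q) : ℤ → Q :=
  fun i => if i ∈ A then δ (fun n => c (i + n.1)) else c i

/-- The difference set `D_{c,c'}` of two global configurations. -/
def diffSetZ {Q : Type*} (c c' : ℤ → Q) : Set ℤ := {i | c i ≠ c' i}

/-- Two fully asynchronous one-dimensional CAs are inverse to each other. -/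
def FullInverseZ {Q : Type*} (N M : Finset ℤ)
    (δ : (↥N → Q) → Q) (γ : (↥M → Q) → Q) : Prop :=
  ∀ c c' : ℤ → Q,
    (∃ a : ℤ, c' = stepZ N δ {a} c) ↔ (∃ a : ℤ, c = stepZ M γ {a} c')

/-- The maximal distance `m` of a neighbor (`0` used in place of `-∞` for `N = ∅`). -/
def mrad (N : Finset ℤ) : ℕ := N.sup fun n => n.natAbs

/-- The finite set `𝒜` of active candidate cells:
`{-|Q|^(2m+1), …, |Q|^(2m+1)}`, or `{0}` when `N = ∅`. -/
def Acand (Q : Type*) [Fintype Q] (N : Finset ℤ) : Set ℤ :=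
  if N = ∅ then {0}
  else {a : ℤ | |a| ≤ (Fintype.card Q : ℤ) ^ (2 * mrad N + 1)}

namespace FullInvAux
variable {Q : Type*}


lemma stepZ_apply (N : Finset ℤ) (δ : (↥N → Q) → Q) (a : ℤ) (c : ℤ → Q) (i : ℤ) :
    stepZ N δ {a} c i = if i = a then δ (fun n => c (i + n.1)) else c i := by
  simp [stepZ, Set.mem_singleton_iff]

lemma eq_stepZ_iff {N : Finset ℤ} {δ : (↥N → Q) → Q} {a : ℤ} {c c' : ℤ → Q} :
    c' = stepZ N δ {a} c ↔
      (c' a = δ (fun n => c (a + n.1)) ∧ ∀ i, i ≠ a → c' i = c i) := by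
  constructor
  · intro h
    constructor
    · have h2 := congrFun h a; rwa [stepZ_apply, if_pos rfl] at h2
    · intro i hi; have h2 := congrFun h i; rwa [stepZ_apply, if_neg hi] at h2
  · rintro ⟨h1, h2⟩
    funext i
    rw [stepZ_apply]
    by_cases hi : i = a
    · subst hi; rw [if_pos rfl]; exact h1
    · rw [if_neg hi]; exact h2 i hi

lemma self_stepZ_iff {N : Finset ℤ} {δ : (↥N → Q) → Q} {a : ℤ} {c : ℤ → Q} :
    c = stepZ N δ {a} c ↔ c a = δ (fun n => c (a + n.1)) := by
  rw [eq_stepZ_iff]; simp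

lemma stepZ_shift_down {N : Finset ℤ} {δ : (↥N → Q) → Q} {a k : ℤ}
    {c c' : ℤ → Q} (h : c' = stepZ N δ {a} c) :
    (fun i => c' (i + k)) = stepZ N δ {a - k} (fun i => c (i + k)) := by
  funext x
  have hx := congrFun h (x + k)
  rw [stepZ_apply] at hx
  show c' (x + k) = stepZ N δ {a - k} (fun i => c (i + k)) x
  rw [stepZ_apply]
  by_cases hb : x = a - k
  · rw [if_pos hb]
    rw [if_pos (by omega : x + k = a)] at hx
    rw [hx]
    congr 1
    funext n
    congr 1
    ring
  · rw [if_neg hb]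
    rw [if_neg (by omega : ¬ x + k = a)] at hx
    exact hx

lemma stepZ_unshift {N : Finset ℤ} {δ : (↥N → Q) → Q} {b k : ℤ}
    {c c' : ℤ → Q} (h : (fun i => c (i + k)) = stepZ N δ {b} (fun i => c' (i + k))) :
    c = stepZ N δ {b + k} c' := by
  funext x
  have hx := congrFun h (x - k)
  rw [stepZ_apply] at hx

  have e1 : x - k + k = x := by ring
  rw [e1] at hx
  rw [stepZ_apply]
  by_cases hb : x = b + k
  · rw [if_pos hb]
    rw [if_pos (by omega : x - k = b)] at hx
    rw [hx]
    congr 1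
    funext n
    congr 1
    ring
  · rw [if_neg hb]
    rw [if_neg (by omega : ¬ x - k = b)] at hx
    exact hx


lemma periodic_of_window (c : ℤ → Q) (i d m : ℤ) (hd : 0 < d)
    (hij : ∀ t : ℤ, |t| ≤ m → c (i + t) = c (i + d + t)) :
    ∀ s : ℤ, -m ≤ s → s ≤ d - 1 + m → c (i + s) = c (i + s % d) := by
  have key : ∀ n : ℕ, ∀ s : ℤ, (if s < 0 then d - 1 + m - s else s).toNat = n →
      -m ≤ s → s ≤ d - 1 + m → c (i + s) = c (i + s % d) := by
    intro n
    induction n using Nat.strong_induction_on with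
    | _ n ih =>
      intro s hn hs1 hs2
      rcases lt_or_ge s 0 with hneg | hpos
      · -- s < 0 : step up by d
        have hm : 0 < m := by omega
        have h1 : c (i + s) = c (i + (s + d)) := by
          have h := hij s (by rw [abs_le]; omega)
          rw [h]; congr 1; ring
        have hmod : s % d = (s + d) % d := by
          conv_rhs => rw [show s + d = s + d*1 by ring]
          rw [Int.add_mul_emod_self_left]
        rcases lt_or_ge (s + d) 0 with h2 | h2
        · rw [h1, hmod]
          exact ih _ (by omega) (s + d) rfl (by omega) (by omega)
        · rcases lt_or_ge (s + d) d with h3 | h3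
          · rw [h1, hmod, Int.emod_eq_of_lt h2 h3]
          · omega
      · -- s ≥ 0
        rcases lt_or_ge s d with h3 | h3
        · rw [Int.emod_eq_of_lt hpos h3]
        · -- s ≥ d : step down by d
          have h1 : c (i + s) = c (i + (s - d)) := by
            have h := hij (s - d) (by rw [abs_le]; omega)
            rw [h]; congr 1; ring
          have hmod : s % d = (s - d) % d := by
            conv_rhs => rw [show s - d = s + d*(-1) by ring]
            rw [Int.add_mul_emod_self_left]
          rw [h1, hmod]
          exact ih _ (by omega) (s - d) rfl (by omega) (by omega)
  intro s hs1 hs2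
  exact key _ s rfl hs1 hs2

lemma exists_repeat [Fintype Q] [Nonempty Q] (c : ℤ → Q) (m : ℕ) (lo : ℤ) :
    ∃ p q : ℤ, lo ≤ p ∧ p < q ∧ q ≤ lo + (Fintype.card Q : ℤ) ^ (2 * m + 1) ∧
      ∀ t : ℤ, |t| ≤ (m : ℤ) → c (p + t) = c (q + t) := by
  set K : ℤ := (Fintype.card Q : ℤ) ^ (2 * m + 1) with hK
  have hK1 : 1 ≤ K := by
    have : 1 ≤ Fintype.card Q := Fintype.card_pos
    have : (1:ℤ) ≤ (Fintype.card Q : ℤ) := by exact_mod_cast this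
    calc (1:ℤ) = 1 ^ (2*m+1) := by norm_num
    _ ≤ (Fintype.card Q : ℤ) ^ (2*m+1) := by
        apply pow_le_pow_left₀ (by norm_num) this
  have hcard : (Finset.univ : Finset (Fin (2*m+1) → Q)).card <
      (Finset.Icc lo (lo + K)).card := by
    rw [Finset.card_univ, Fintype.card_fun, Int.card_Icc]
    simp only [Fintype.card_fin]
    have : (lo + K + 1 - lo) = K + 1 := by ring
    rw [this]
    have : ((Fintype.card Q ^ (2*m+1) : ℕ) : ℤ) = K := by push_cast [hK]; ring
    omega
  obtain ⟨p, hp, q, hq, hpq, hfeq⟩ :=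
    Finset.exists_ne_map_eq_of_card_lt_of_maps_to hcard
      (f := fun (x : ℤ) => (fun t : Fin (2*m+1) => c (x + t.1 - m)))
      (fun x _ => Finset.mem_univ _)
  simp only [Finset.mem_Icc] at hp hq
  have main : ∀ p q : ℤ, (fun t : Fin (2*m+1) => c (p + t.1 - m)) =
      (fun t : Fin (2*m+1) => c (q + t.1 - m)) →
      ∀ t : ℤ, |t| ≤ (m:ℤ) → c (p + t) = c (q + t) := by
    intro p q hfe t ht
    rw [abs_le] at ht
    have h := congrFun hfe ⟨(t + m).toNat, by omega⟩
    simp only at h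
    convert h using 2 <;> omega
  rcases lt_or_gt_of_ne hpq with h | h
  · exact ⟨p, q, hp.1, h, hq.2, main p q hfeq⟩
  · exact ⟨q, p, hq.1, h, hp.2, main q p hfeq.symm⟩


def pump (i v d e p : ℤ) : ℤ :=
  if i ≤ p then i + (p - i) % d else if p ≤ v then v - (v - p) % e else p

lemma pump_bounds (i v d e p : ℤ) (hd : 0 < d) (he : 0 < e) (hvi : v < i) :
    v - (e - 1) ≤ pump i v d e p ∧ pump i v d e p ≤ i + (d - 1) := by
  unfold pump
  split_ifs with h1 h2
  · have := Int.emod_nonneg (p - i) (ne_of_gt hd)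
    have := Int.emod_lt_of_pos (p - i) hd
    omega
  · have := Int.emod_nonneg (v - p) (ne_of_gt he)
    have := Int.emod_lt_of_pos (v - p) he
    omega
  · omega

lemma pump_key (c : ℤ → Q) (i v d e m : ℤ)
    (hd : 0 < d) (he : 0 < e) (hm : 0 ≤ m) (hv : v < 0) (hi : 0 < i)
    (C1 : ∀ s, -m ≤ s → s ≤ d - 1 + m → c (i + s) = c (i + s % d))
    (C2 : ∀ s, -m ≤ s → s ≤ e - 1 + m → c (v - s) = c (v - s % e)) :
    ∀ p t : ℤ, |t| ≤ m → c (pump i v d e (p + t)) = c (pump i v d e p + t) := by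
  -- helper equalities
  have E1 : ∀ x t : ℤ, -m ≤ t → t ≤ m → c (i + x % d + t) = c (i + (x + t) % d) := by
    intro x t h1 h2
    have hb1 : 0 ≤ x % d := Int.emod_nonneg x (ne_of_gt hd)
    have hb2 : x % d < d := Int.emod_lt_of_pos x hd
    have h := C1 (x % d + t) (by omega) (by omega)
    rw [Int.emod_add_emod] at h
    calc c (i + x % d + t) = c (i + (x % d + t)) := by ring_nf
    _ = c (i + (x + t) % d) := h
  have E2 : ∀ x t : ℤ, -m ≤ t → t ≤ m → c (v - x % e + t) = c (v - (x - t) % e) := by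
    intro x t h1 h2
    have hb1 : 0 ≤ x % e := Int.emod_nonneg x (ne_of_gt he)
    have hb2 : x % e < e := Int.emod_lt_of_pos x he
    have h := C2 (x % e - t) (by omega) (by omega)
    have hmm : (x % e - t) % e = (x - t) % e := by
      rw [Int.sub_emod, Int.emod_emod_of_dvd _ dvd_rfl, ← Int.sub_emod]
    rw [hmm] at h
    calc c (v - x % e + t) = c (v - (x % e - t)) := by ring_nf
    _ = c (v - (x - t) % e) := h
  intro p t ht
  rw [abs_le] at ht
  obtain ⟨ht1, ht2⟩ := ht
  unfold pump
  by_cases hp : i ≤ p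
  · rw [if_pos hp]
    have hrhs : c (i + (p - i) % d + t) = c (i + (p + t - i) % d) := by
      rw [E1 (p - i) t ht1 ht2]; congr 2; ring
    by_cases hq : i ≤ p + t
    · rw [if_pos hq, hrhs]
    · rw [if_neg hq]
      have hC1 : c (p + t) = c (i + (p + t - i) % d) := by
        have h := C1 (p + t - i) (by omega) (by omega)
        rw [show i + (p + t - i) = p + t by ring] at h
        exact h
      by_cases hr : p + t ≤ v
      · rw [if_pos hr, hrhs, ← hC1]
        have h := C2 (v - (p + t)) (by omega) (by omega)
        rw [show v - (v - (p + t)) = p + t by ring] at h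
        exact h.symm
      · rw [if_neg hr]
        rw [hrhs]
        rw [← hC1]
  · rw [if_neg hp]
    by_cases hp2 : p ≤ v
    · rw [if_pos hp2]
      have hrhs : c (v - (v - p) % e + t) = c (v - (v - p - t) % e) := by
        rw [E2 (v - p) t ht1 ht2]
      by_cases hq : i ≤ p + t
      · rw [if_pos hq, hrhs]
        have h1 := C1 (p + t - i) (by omega) (by omega)
        rw [show i + (p + t - i) = p + t by ring] at h1
        have h2 := C2 (v - p - t) (by omega) (by omega)
        rw [show v - (v - p - t) = p + t by ring] at h2
        rw [← h1, ← h2]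
      · rw [if_neg hq]
        by_cases hr : p + t ≤ v
        · rw [if_pos hr, hrhs]
          congr 2
          ring
        · rw [if_neg hr, hrhs]
          have h2 := C2 (v - p - t) (by omega) (by omega)
          rw [show v - (v - p - t) = p + t by ring] at h2
          exact h2
    · rw [if_neg hp2]
      by_cases hq : i ≤ p + t
      · rw [if_pos hq]
        have h1 := C1 (p + t - i) (by omega) (by omega)
        rw [show i + (p + t - i) = p + t by ring] at h1
        exact h1.symm
      · rw [if_neg hq]
        by_cases hr : p + t ≤ v
        · rw [if_pos hr]
          have h2 := C2 (v - (p + t)) (by omega) (by omega)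
          rw [show v - (v - (p + t)) = p + t by ring] at h2
          exact h2.symm
        · rw [if_neg hr]

lemma exists_bounded_fixed [Fintype Q] (N : Finset ℤ)
    (δ γ : (↥N → Q) → Q) (hinv : FullInverseZ N N δ γ)
    (c : ℤ → Q) (hc : c = stepZ N δ {(0:ℤ)} c) :
    ∃ a ∈ Acand Q N, c = stepZ N γ {a} c := by
  haveI : Nonempty Q := ⟨c 0⟩
  by_cases hN : N = ∅
  · subst hN
    have hwin : ∀ (x y : (↥(∅:Finset ℤ) → Q)), x = y := by
      intro x y; funext n; exact absurd n.2 (Finset.notMem_empty _)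
    have hδ : ∀ (x y : (↥(∅:Finset ℤ) → Q)), δ x = δ y := fun x y => by rw [hwin x y]
    have hγ : ∀ (x y : (↥(∅:Finset ℤ) → Q)), γ x = γ y := fun x y => by rw [hwin x y]
    have hcfix : (fun _ : ℤ => c 0) = stepZ ∅ δ {(0:ℤ)} (fun _ : ℤ => c 0) := by
      rw [self_stepZ_iff]
      calc c 0 = δ (fun n => c ((0:ℤ) + n.1)) := self_stepZ_iff.mp hc
      _ = δ (fun n => (fun _ : ℤ => c 0) ((0:ℤ) + n.1)) := hδ _ _
    obtain ⟨a, ha⟩ := (hinv _ _).mp ⟨0, hcfix⟩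
    refine ⟨0, ?_, ?_⟩
    · simp [Acand]
    · rw [self_stepZ_iff]
      calc c 0 = γ (fun n => (fun _ : ℤ => c 0) (a + n.1)) := self_stepZ_iff.mp ha
      _ = γ (fun n => c ((0:ℤ) + n.1)) := hγ _ _
  · set m' : ℕ := mrad N with hm'
    have hnm : ∀ n : ↥N, |(n.1 : ℤ)| ≤ (m' : ℤ) := by
      intro n
      have h := Finset.le_sup (f := fun n : ℤ => n.natAbs) n.2
      rw [Int.abs_eq_natAbs]
      exact_mod_cast h
    obtain ⟨i, j, hi1, hij, hj, hwr⟩ := exists_repeat c m' 1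
    obtain ⟨u, v, hu1, huv, hv, hwl⟩ := exists_repeat c m' (-((Fintype.card Q : ℤ) ^ (2 * m' + 1) + 1))
    set K : ℤ := (Fintype.card Q : ℤ) ^ (2 * m' + 1) with hKdef
    set d : ℤ := j - i with hd'
    set e : ℤ := v - u with he'
    have hd : 0 < d := by omega
    have he : 0 < e := by omega
    have hipos : 0 < i := by omega
    have hvneg : v < 0 := by omega
    have C1 : ∀ s : ℤ, -(m' : ℤ) ≤ s → s ≤ d - 1 + m' → c (i + s) = c (i + s % d) := by
      apply periodic_of_window c i d m' hd
      intro t ht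
      rw [hwr t ht]
      congr 1
      omega
    have C2 : ∀ s : ℤ, -(m' : ℤ) ≤ s → s ≤ e - 1 + m' → c (v - s) = c (v - s % e) := by
      have hmain := periodic_of_window (fun x => c (-x)) (-v) e m' he ?_
      · intro s h1 h2
        have h := hmain s h1 h2
        rw [show -(-v + s) = v - s by ring, show -(-v + s % e) = v - s % e by ring] at h
        exact h
      · intro t ht
        show c (-(-v + t)) = c (-(-v + e + t))
        rw [show -(-v + t) = v + (-t) by ring, show -(-v + e + t) = u + (-t) by omega]
        exact (hwl (-t) (by rwa [abs_neg])).symm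
    have key := pump_key c i v d e m' hd he (by positivity) hvneg hipos C1 C2
    have hσ0 : pump i v d e 0 = 0 := by
      unfold pump
      rw [if_neg (by omega), if_neg (by omega)]
    have hcp : (fun p => c (pump i v d e p)) = stepZ N δ {(0:ℤ)} (fun p => c (pump i v d e p)) := by
      rw [self_stepZ_iff]
      have hweq : (fun n : ↥N => (fun p => c (pump i v d e p)) ((0:ℤ) + n.1)) =
          (fun n : ↥N => c ((0:ℤ) + n.1)) := by
        funext n
        show c (pump i v d e (0 + n.1)) = c (0 + n.1)
        rw [key 0 n.1 (hnm n), hσ0]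
      show c (pump i v d e 0) = _
      rw [hσ0, hweq]
      exact self_stepZ_iff.mp hc
    obtain ⟨a, ha⟩ := (hinv _ _).mp ⟨0, hcp⟩
    have ha' := self_stepZ_iff.mp ha
    have hgoal : c (pump i v d e a) = γ (fun n => c (pump i v d e a + n.1)) := by
      have hweq : (fun n : ↥N => (fun p => c (pump i v d e p)) (a + n.1)) =
          (fun n : ↥N => c (pump i v d e a + n.1)) := by
        funext n
        exact key a n.1 (hnm n)
      rw [← hweq]
      exact ha'
    have hb := pump_bounds i v d e a hd he (by omega)
    refine ⟨pump i v d e a, ?_, self_stepZ_iff.mpr hgoal⟩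
    simp only [Acand, if_neg hN, Set.mem_setOf_eq]
    rw [show 2 * mrad N + 1 = 2 * m' + 1 from by rw [hm'], ← hKdef, abs_le]
    omega

lemma diff_comm (c c' : ℤ → Q) : diffSetZ c c' = diffSetZ c' c := by
  ext x
  exact ne_comm

lemma fwd1 {N : Finset ℤ} {δ γ : (↥N → Q) → Q} (hinv : FullInverseZ N N δ γ)
    (c c' : ℤ → Q) (hdiff : diffSetZ c c' = {0}) :
    (c' = stepZ N δ {(0:ℤ)} c ↔ c = stepZ N γ {(0:ℤ)} c') := by
  have h0 : c 0 ≠ c' 0 := by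
    have hm : (0:ℤ) ∈ diffSetZ c c' := by rw [hdiff]; exact rfl
    exact hm
  constructor
  · intro h
    obtain ⟨a, ha⟩ := (hinv c c').mp ⟨0, h⟩
    have haz : a = 0 := by
      by_contra hne
      obtain ⟨h1', h2'⟩ := eq_stepZ_iff.mp ha
      exact h0 (h2' 0 (fun hh => hne hh.symm))
    rwa [haz] at ha
  · intro h
    obtain ⟨a, ha⟩ := (hinv c c').mpr ⟨0, h⟩
    have haz : a = 0 := by
      by_contra hne
      obtain ⟨h1', h2'⟩ := eq_stepZ_iff.mp ha
      exact h0 ((h2' 0 (fun hh => hne hh.symm)).symm)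
    rwa [haz] at ha

lemma update_step_iff {N : Finset ℤ} {δ : (↥N → Q) → Q} (C : ℤ → Q) (q q' : Q) :
    Function.update C 0 q' = stepZ N δ {(0:ℤ)} (Function.update C 0 q) ↔
      q' = δ (fun n => Function.update C 0 q ((0:ℤ) + n.1)) := by
  rw [eq_stepZ_iff]
  constructor
  · rintro ⟨h1, -⟩
    rw [← h1, Function.update_self]
  · intro h
    refine ⟨by rw [Function.update_self]; exact h, fun i hi => ?_⟩
    rw [Function.update_of_ne hi, Function.update_of_ne hi]

lemma diff_update (C : ℤ → Q) {q q' : Q} (h : q ≠ q') :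
    diffSetZ (Function.update C 0 q) (Function.update C 0 q') = {0} := by
  ext x
  simp only [diffSetZ, Set.mem_setOf_eq, Set.mem_singleton_iff]
  by_cases hx : x = 0
  · subst hx; simp [h]
  · simp [Function.update_of_ne hx, hx]

lemma diff_of_step {N : Finset ℤ} {δ : (↥N → Q) → Q} {C C' : ℤ → Q}
    (h : C' = stepZ N δ {(0:ℤ)} C) (hne : C ≠ C') : diffSetZ C C' = {0} := by
  obtain ⟨h1, h2⟩ := eq_stepZ_iff.mp h
  ext x
  simp only [diffSetZ, Set.mem_setOf_eq, Set.mem_singleton_iff]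
  constructor
  · intro hx
    by_contra h0
    exact hx ((h2 x h0).symm)
  · rintro rfl
    intro h0
    apply hne
    funext y
    by_cases hy : y = 0
    · subst hy; exact h0
    · exact (h2 y hy).symm

lemma exists_gamma_fixed [Fintype Q] {N : Finset ℤ} {δ γ : (↥N → Q) → Q}
    (h1 : ∀ c c' : ℤ → Q, diffSetZ c c' = {0} →
        (c' = stepZ N δ {(0:ℤ)} c ↔ c = stepZ N γ {(0:ℤ)} c'))
    (C : ℤ → Q) (hfix : C = stepZ N δ {(0:ℤ)} C) :
    ∃ q : Q, Function.update C 0 q = stepZ N γ {(0:ℤ)} (Function.update C 0 q) := by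
  by_contra hno
  push_neg at hno
  set f : Q → Q := fun q => γ (fun n => Function.update C 0 q ((0:ℤ) + n.1)) with hf
  set g : Q → Q := fun q => δ (fun n => Function.update C 0 q ((0:ℤ) + n.1)) with hg
  have hfne : ∀ q, f q ≠ q := by
    intro q hq
    apply hno q
    have := (update_step_iff (δ := γ) C q q).mpr
    apply this
    rw [hf] at hq
    exact hq.symm
  have hrel : ∀ q : Q, g (f q) = q := by
    intro q
    have hdu := diff_update C (hfne q)
    have hiff := h1 (Function.update C 0 (f q)) (Function.update C 0 q) hdu
    have hr : Function.update C 0 (f q) = stepZ N γ {(0:ℤ)} (Function.update C 0 q) := by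
      rw [update_step_iff]
    have hl := hiff.mpr hr
    have hq' := (update_step_iff (δ := δ) C (f q) q).mp hl
    rw [hg]
    exact hq'.symm
  have hq0 : g (C 0) = C 0 := by
    have hu : Function.update C 0 (C 0) = C := Function.update_eq_self 0 C
    rw [hg]
    simp only [hu]
    exact (self_stepZ_iff.mp hfix).symm
  have hinj : Function.Injective f := Function.LeftInverse.injective hrel
  have hsurj : Function.Surjective f := Finite.surjective_of_injective hinj
  obtain ⟨q, hq⟩ := hsurj (C 0)
  have hqc : q = C 0 := by rw [← hrel q, hq, hq0]
  exact hfne (C 0) (by rw [← hqc, hq, hqc])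

lemma half [Fintype Q] {N : Finset ℤ} {δ γ : (↥N → Q) → Q}
    (h1 : ∀ c c' : ℤ → Q, diffSetZ c c' = {0} →
        (c' = stepZ N δ {(0:ℤ)} c ↔ c = stepZ N γ {(0:ℤ)} c'))
    (h2 : ∀ c c' : ℤ → Q, c = stepZ N δ {(0:ℤ)} c → c' = stepZ N γ {(0:ℤ)} c' →
        ∃ a : ℤ, c = stepZ N γ {a} c)
    (c c' : ℤ → Q) (a : ℤ) (h : c' = stepZ N δ {a} c) :
    ∃ b : ℤ, c = stepZ N γ {b} c' := by
  have hC : (fun i => c' (i + a)) = stepZ N δ {(0:ℤ)} (fun i => c (i + a)) := by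
    have hh := stepZ_shift_down (k := a) h
    rwa [sub_self] at hh
  by_cases hcc : (fun i => c (i + a)) = (fun i => c' (i + a))
  · have hfix : (fun i => c (i + a)) = stepZ N δ {(0:ℤ)} (fun i => c (i + a)) := by
      rw [← hcc] at hC
      exact hC
    obtain ⟨q, hq⟩ := exists_gamma_fixed h1 (fun i => c (i + a)) hfix
    obtain ⟨b, hb⟩ := h2 (fun i => c (i + a)) (Function.update (fun i => c (i + a)) 0 q) hfix hq
    refine ⟨b + a, stepZ_unshift (k := a) ?_⟩
    rw [← hcc]
    exact hb
  · have hdiff := diff_of_step hC hcc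
    have hres := (h1 _ _ hdiff).mp hC
    exact ⟨0 + a, stepZ_unshift (k := a) hres⟩

end FullInvAux

open FullInvAux

/-- Characterization of fully asynchronous one-dimensional inverses via the
finite set `𝒜` of active candidate cells. -/
theorem full_inverse_candidate_characterization {Q : Type*} [Fintype Q]
    (N : Finset ℤ) (δ γ : (↥N → Q) → Q) :
    FullInverseZ N N δ γ ↔
      ((∀ c c' : ℤ → Q, diffSetZ c c' = {0} →
          (c' = stepZ N δ {(0 : ℤ)} c ↔ c = stepZ N γ {(0 : ℤ)} c')) ∧
       (∀ c c' : ℤ → Q,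
          c = stepZ N δ {(0 : ℤ)} c → c' = stepZ N γ {(0 : ℤ)} c' →
          (∃ a ∈ Acand Q N, c = stepZ N γ {a} c) ∧
          (∃ a' ∈ Acand Q N, c' = stepZ N δ {a'} c'))) := by
  constructor
  · intro hinv
    refine ⟨fun c c' hd => fwd1 hinv c c' hd, fun c c' hc hc' => ?_⟩
    have hsymm : FullInverseZ N N γ δ := fun x y => (hinv y x).symm
    exact ⟨exists_bounded_fixed N δ γ hinv c hc,
      exists_bounded_fixed N γ δ hsymm c' hc'⟩
  · rintro ⟨H1, H2⟩
    intro c c'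
    constructor
    · rintro ⟨a, ha⟩
      refine half H1 ?_ c c' a ha
      intro x y hx hy
      obtain ⟨b, -, hb⟩ := (H2 x y hx hy).1
      exact ⟨b, hb⟩
    · rintro ⟨a, ha⟩
      have H1' : ∀ x y : ℤ → Q, diffSetZ x y = {0} →
          (y = stepZ N γ {(0:ℤ)} x ↔ x = stepZ N δ {(0:ℤ)} y) := by
        intro x y hd
        have hd' : diffSetZ y x = {0} := by rw [diff_comm]; exact hd
        exact (H1 y x hd').symm
      refine half H1' ?_ c' c a ha
      intro x y hx hy
      obtain ⟨b, -, hb⟩ := (H2 y x hy hx).2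
      exact ⟨b, hb⟩
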